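/- Let k ≥ 1, let A and B be real symmetric k×k matrices with B positive definite, and suppose A ⪰ c·B in the Loewner order for some constant c > 0. Then A is positive definite and for every real symmetric k×k matrix M, ‖A^{-1/2} M A^{-1/2}‖ ≤ (1/c)·‖B^{-1/2} M B^{-1/2}‖, where X^{1/2} denotes the unique positive definite square root of a positive definite matrix X, X^{-1/2} its inverse, and ‖·‖ the operator (spectral) norm. -/

import Mathlib

open scoped BigOperators RealInnerProductSpace
open Matrix
open scoped MatrixOrder

/-- Operator (spectral) norm of a matrix. -/
noncomputable def opNorm {k : ℕ} (A : Matrix (Fin k) (Fin k) ℝ) : ℝ :=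
  ‖Matrix.toEuclideanCLM (𝕜 := ℝ) A‖


lemma selfadj_opNorm_le {E : Type*} [NormedAddCommGroup E] [InnerProductSpace ℝ E]
    (T : E →L[ℝ] E) (hT : ∀ x y : E, ⟪T x, y⟫ = ⟪x, T y⟫) {r : ℝ} (hr : 0 ≤ r)
    (h : ∀ x : E, |⟪T x, x⟫| ≤ r * ‖x‖ ^ 2) : ‖T‖ ≤ r := by
  refine T.opNorm_le_bound hr (fun x => ?_)
  rcases eq_or_ne (T x) 0 with h0 | h0
  · simp only [h0, norm_zero]
    exact mul_nonneg hr (norm_nonneg x)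
  have hx : x ≠ 0 := by rintro rfl; simp at h0
  have hTx : (0 : ℝ) < ‖T x‖ := norm_pos_iff.mpr h0
  have hxn : (0 : ℝ) < ‖x‖ := norm_pos_iff.mpr hx
  set y := (‖x‖ / ‖T x‖) • T x with hy
  have hyn : ‖y‖ = ‖x‖ := by
    rw [hy, norm_smul, Real.norm_eq_abs, abs_of_nonneg (by positivity),
      div_mul_cancel₀ _ hTx.ne']
  have hinner : ⟪T x, y⟫ = ‖x‖ * ‖T x‖ := by
    rw [hy, real_inner_smul_right, real_inner_self_eq_norm_sq]
    field_simp
  have key : ⟪T x, y⟫ * 4 = ⟪T (x + y), x + y⟫ - ⟪T (x - y), x - y⟫ := by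
    have e1 : ⟪T y, x⟫ = ⟪T x, y⟫ := by rw [hT y x, real_inner_comm]
    simp only [map_add, map_sub, inner_add_left, inner_add_right, inner_sub_left,
      inner_sub_right]
    linarith
  have hb1 := (abs_le.mp (h (x + y))).2
  have hb2 := (abs_le.mp (h (x - y))).1
  have hpar : ‖x + y‖ ^ 2 + ‖x - y‖ ^ 2 = 2 * ‖x‖ ^ 2 + 2 * ‖y‖ ^ 2 := by
    rw [norm_add_sq_real, norm_sub_sq_real]; ring
  rw [hyn] at hpar
  have h4 : ‖x‖ * ‖T x‖ * 4 ≤ r * (4 * ‖x‖ ^ 2) := by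
    have hk := key
    rw [hinner] at hk
    nlinarith [hpar, hb1, hb2]
  nlinarith [h4, hxn]

lemma inner_toEuclideanCLM {k : ℕ} (X : Matrix (Fin k) (Fin k) ℝ)
    (x y : EuclideanSpace ℝ (Fin k)) :
    ⟪x, (Matrix.toEuclideanCLM (𝕜 := ℝ) X) y⟫ =
      star (WithLp.equiv 2 _ x) ⬝ᵥ (X *ᵥ (WithLp.equiv 2 _ y)) := by
  have hfun : ∀ i, (Matrix.toEuclideanCLM (𝕜 := ℝ) X) y i = (X *ᵥ (WithLp.equiv 2 _ y)) i := by
    intro i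
    rfl
  simp only [PiLp.inner_apply, dotProduct, hfun, RCLike.inner_apply, starRingEnd_apply, star_trivial, Pi.star_apply]
  exact Finset.sum_congr rfl fun i _ => mul_comm _ _

theorem loewner_inv_sqrt_conj_opNorm' {k : ℕ} (hk : 1 ≤ k) (A B : Matrix (Fin k) (Fin k) ℝ)
    (hAsymm : A.IsSymm) (hBsymm : B.IsSymm) (hB : B.PosDef) (c : ℝ) (hc : 0 < c)
    (hAB : (A - c • B).PosSemidef) :
    ∃ hA : A.PosDef, ∀ M : Matrix (Fin k) (Fin k) ℝ, M.IsSymm →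
      ‖Matrix.toEuclideanCLM (𝕜 := ℝ) ((CFC.sqrt A)⁻¹ * M * (CFC.sqrt A)⁻¹)‖
        ≤ (1 / c) * ‖Matrix.toEuclideanCLM (𝕜 := ℝ) ((CFC.sqrt B)⁻¹ * M * (CFC.sqrt B)⁻¹)‖ := by
  have hcB : (c • B).PosDef := by
    refine Matrix.PosDef.of_dotProduct_mulVec_pos ?_ (fun x hx => ?_)
    · unfold Matrix.IsHermitian
      rw [conjTranspose_smul, hB.1]
      simp
    · rw [smul_mulVec, dotProduct_smul, smul_eq_mul]
      exact mul_pos hc (hB.dotProduct_mulVec_pos hx)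
  have hA : A.PosDef := by
    have h := Matrix.PosDef.posSemidef_add hAB hcB
    rwa [sub_add_cancel] at h
  -- square-root facts
  have sqrtFacts : ∀ {P : Matrix (Fin k) (Fin k) ℝ} (hP : P.PosDef),
      CFC.sqrt P * (CFC.sqrt P)⁻¹ = 1 ∧
      ((CFC.sqrt P)⁻¹).IsHermitian := by
    intro P hP
    have hR : (CFC.sqrt P).PosSemidef := (CFC.sqrt_nonneg _).posSemidef
    have hRR : CFC.sqrt P * CFC.sqrt P = P := CFC.sqrt_mul_sqrt_self _ hP.posSemidef.nonneg
    have hdet : IsUnit (CFC.sqrt P).det := by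
      have h2 : (CFC.sqrt P).det * (CFC.sqrt P).det = P.det := by
        rw [← det_mul, hRR]
      have : P.det ≠ 0 := hP.det_pos.ne'
      refine isUnit_iff_ne_zero.mpr (fun h0 => this ?_)
      rw [← h2, h0, mul_zero]
    exact ⟨Matrix.mul_nonsing_inv _ hdet, hR.1.inv⟩
  -- inner-product facts
  have innerSym : ∀ (X : Matrix (Fin k) (Fin k) ℝ), X.IsHermitian →
      ∀ u v : EuclideanSpace ℝ (Fin k),
      ⟪(Matrix.toEuclideanCLM (𝕜 := ℝ) X) u, v⟫ = ⟪u, (Matrix.toEuclideanCLM (𝕜 := ℝ) X) v⟫ := by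
    intro X hX u v
    have hsa : _root_.IsSelfAdjoint (Matrix.toEuclideanCLM (𝕜 := ℝ) X) := by
      rw [_root_.IsSelfAdjoint, ← map_star]
      congr 1
    exact hsa.isSymmetric u v
  have innerNonneg : ∀ {P : Matrix (Fin k) (Fin k) ℝ}, P.PosSemidef →
      ∀ x : EuclideanSpace ℝ (Fin k), 0 ≤ ⟪x, (Matrix.toEuclideanCLM (𝕜 := ℝ) P) x⟫ := by
    intro P hP x
    rw [_root_.inner_toEuclideanCLM]
    exact hP.dotProduct_mulVec_nonneg _
  refine ⟨hA, fun M hMsymm => ?_⟩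
  set φ := Matrix.toEuclideanCLM (𝕜 := ℝ) (n := Fin k) with hφ
  set S := CFC.sqrt A with hSdef
  set Tm := CFC.sqrt B with hTdef
  obtain ⟨hSmul, hSinvH⟩ := sqrtFacts hA
  obtain ⟨hTmul, hTinvH⟩ := sqrtFacts hB
  have hSH : S.IsHermitian := (CFC.sqrt_nonneg _).posSemidef.1
  have hTH : Tm.IsHermitian := (CFC.sqrt_nonneg _).posSemidef.1
  have hSS : S * S = A := CFC.sqrt_mul_sqrt_self _ hA.posSemidef.nonneg
  have hTT : Tm * Tm = B := CFC.sqrt_mul_sqrt_self _ hB.posSemidef.nonneg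
  have hTmul' : Tm⁻¹ * Tm = 1 := by
    calc Tm⁻¹ * Tm = ((Tm⁻¹ * Tm)ᵀ)ᵀ := by rw [transpose_transpose]
    _ = 1 := by
      rw [transpose_mul]
      have h1 : Tmᵀ = Tm := by
        rw [← conjTranspose_eq_transpose_of_trivial]; exact hTH
      have h2 : Tm⁻¹ᵀ = Tm⁻¹ := by
        rw [← conjTranspose_eq_transpose_of_trivial]; exact hTinvH
      rw [h1, h2, hTmul, transpose_one]
  have hM : M.IsHermitian := by
    rw [Matrix.IsHermitian, conjTranspose_eq_transpose_of_trivial]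
    exact hMsymm
  set N := Tm⁻¹ * M * Tm⁻¹ with hNdef
  have hNH : N.IsHermitian := by
    rw [Matrix.IsHermitian, hNdef, conjTranspose_mul, conjTranspose_mul,
      hTinvH.eq, hM.eq, mul_assoc]
  have hXH : (S⁻¹ * M * S⁻¹).IsHermitian := by
    rw [Matrix.IsHermitian, conjTranspose_mul, conjTranspose_mul,
      hSinvH.eq, hM.eq, mul_assoc]
  set s := ‖φ N‖ with hs
  have hs0 : 0 ≤ s := norm_nonneg _
  have hr0 : 0 ≤ (1 / c) * s := mul_nonneg (by positivity) hs0
  refine selfadj_opNorm_le _ (innerSym _ hXH) hr0 (fun x => ?_)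
  set w := φ S⁻¹ x with hw
  have happ : φ (S⁻¹ * M * S⁻¹) x = φ S⁻¹ (φ M w) := by
    simp only [_root_.map_mul, ContinuousLinearMap.mul_apply, hw]
  have hMeq : Tm * N * Tm = M := by
    have h1 : Tm * N * Tm = Tm * Tm⁻¹ * M * (Tm⁻¹ * Tm) := by
      rw [hNdef]; noncomm_ring
    rw [h1, hTmul, hTmul', one_mul, mul_one]
  set u := φ Tm w with hu
  have step1 : ⟪φ (S⁻¹ * M * S⁻¹) x, x⟫ = ⟪φ N u, u⟫ := by
    rw [happ, innerSym _ hSinvH, ← hw]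
    conv_lhs => rw [← hMeq]
    simp only [_root_.map_mul, ContinuousLinearMap.mul_apply]
    rw [innerSym _ hTH, ← hu]
  have hSwx : φ S w = x := by
    rw [hw, ← ContinuousLinearMap.mul_apply, ← _root_.map_mul, hSmul, _root_.map_one,
      ContinuousLinearMap.one_apply]
  have hAw : ⟪w, φ A w⟫ = ‖x‖ ^ 2 := by
    rw [← hSS, _root_.map_mul, ContinuousLinearMap.mul_apply, ← innerSym _ hSH, hSwx,
      real_inner_self_eq_norm_sq]
  have hBw0 : 0 ≤ ⟪w, φ B w⟫ := innerNonneg hB.posSemidef w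
  have hBwA : c * ⟪w, φ B w⟫ ≤ ‖x‖ ^ 2 := by
    have h0 : 0 ≤ ⟪w, φ (A - c • B) w⟫ := innerNonneg hAB w
    rw [map_sub, _root_.map_smul] at h0
    simp only [ContinuousLinearMap.sub_apply, ContinuousLinearMap.smul_apply,
      inner_sub_right, inner_smul_right] at h0
    rw [← hAw]
    linarith
  have hu2 : ‖u‖ ^ 2 = ⟪w, φ B w⟫ := by
    rw [← real_inner_self_eq_norm_sq, hu, innerSym _ hTH,
      ← ContinuousLinearMap.mul_apply, ← _root_.map_mul, hTT]
  have hNu : |⟪φ N u, u⟫| ≤ s * ‖u‖ ^ 2 := by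
    calc |⟪φ N u, u⟫| ≤ ‖φ N u‖ * ‖u‖ := abs_real_inner_le_norm _ _
    _ ≤ (s * ‖u‖) * ‖u‖ :=
      mul_le_mul_of_nonneg_right ((φ N).le_opNorm u) (norm_nonneg _)
    _ = s * ‖u‖ ^ 2 := by ring
  rw [step1]
  calc |⟪φ N u, u⟫| ≤ s * ‖u‖ ^ 2 := hNu
  _ = s * ⟪w, φ B w⟫ := by rw [hu2]
  _ ≤ s * ((1 / c) * ‖x‖ ^ 2) := by
    apply mul_le_mul_of_nonneg_left _ hs0
    rw [show (1 / c) * ‖x‖ ^ 2 = ‖x‖ ^ 2 / c by ring, le_div_iff₀ hc]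
    linarith [hBwA]
  _ = (1 / c) * s * ‖x‖ ^ 2 := by ring


/-- If `A, B` are real symmetric, `B` positive definite and `A ⪰ cB` (Loewner) with `c > 0`, then
`A` is positive definite (with proof `hA`), and for every real symmetric `M`,
`‖A^{-1/2} M A^{-1/2}‖ ≤ (1/c) ‖B^{-1/2} M B^{-1/2}‖` in the operator norm, where the square
roots are the unique positive definite ones. -/
theorem loewner_inv_sqrt_conj_opNorm {k : ℕ} (hk : 1 ≤ k) (A B : Matrix (Fin k) (Fin k) ℝ)
    (hAsymm : A.IsSymm) (hBsymm : B.IsSymm) (hB : B.PosDef) (c : ℝ) (hc : 0 < c)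
    (hAB : (A - c • B).PosSemidef) :
    ∃ hA : A.PosDef, ∀ M : Matrix (Fin k) (Fin k) ℝ, M.IsSymm →
      opNorm ((CFC.sqrt A)⁻¹ * M * (CFC.sqrt A)⁻¹)
        ≤ (1 / c) * opNorm ((CFC.sqrt B)⁻¹ * M * (CFC.sqrt B)⁻¹) := by
  obtain ⟨hA, h⟩ := loewner_inv_sqrt_conj_opNorm' hk A B hAsymm hBsymm hB c hc hAB
  exact ⟨hA, fun M hM => h M hM⟩
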